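/- Let x^(k), v^(k), u^(k) be Plug-and-Play ADMM iterates with monotone parameter update ρ_{k+1} = γ ρ_k for all k ≥ 0, where ρ_0 > 0 and γ > 1, for a differentiable f with gradient bounded by L√n and a bounded denoiser with constant C ≥ 0. Then for every k ≥ 1, ‖x^(k+1) − v^(k+1)‖₂/√n ≤ √(λC/ρ_k) + √(λC/ρ_{k−1}); in particular ‖x^(k) − v^(k)‖₂ → 0 as k → ∞. -/

import Mathlib

open Filter Topology

/-- **Primal residual convergence of Plug-and-Play ADMM with monotone update rule.**
For monotone updates `ρ (k+1) = γ * ρ k` with `γ > 1`, for every `k ≥ 1`,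
`‖x^(k+1) − v^(k+1)‖/√n ≤ √(λC/ρ_k) + √(λC/ρ_{k-1})`, and `‖x^(k) − v^(k)‖ → 0`. -/
theorem plug_and_play_admm_primal_residual
    (n : ℕ) (hn : 1 ≤ n)
    (f : EuclideanSpace ℝ (Fin n) → ℝ) (L : ℝ)
    (hf : Differentiable ℝ f)
    (hgrad : ∀ z : EuclideanSpace ℝ (Fin n), ‖gradient f z‖ ≤ L * Real.sqrt n)
    (D : ℝ → EuclideanSpace ℝ (Fin n) → EuclideanSpace ℝ (Fin n)) (C : ℝ)
    (hC : 0 ≤ C)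
    (hD : ∀ σ : ℝ, 0 < σ → ∀ z : EuclideanSpace ℝ (Fin n),
      ‖D σ z - z‖ ^ 2 ≤ (n : ℝ) * σ ^ 2 * C)
    (lam : ℝ) (hlam : 0 < lam)
    (ρ : ℕ → ℝ) (hρ : ∀ k, 0 < ρ k)
    (γ : ℝ) (hγ : 1 < γ)
    (hupdate : ∀ k, ρ (k + 1) = γ * ρ k)
    (x v u : ℕ → EuclideanSpace ℝ (Fin n))
    (hx : ∀ k, ∀ z : EuclideanSpace ℝ (Fin n),
      f (x (k + 1)) + ρ k / 2 * ‖x (k + 1) - (v k - u k)‖ ^ 2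
        ≤ f z + ρ k / 2 * ‖z - (v k - u k)‖ ^ 2)
    (hv : ∀ k, v (k + 1) = D (Real.sqrt (lam / ρ k)) (x (k + 1) + u k))
    (hu : ∀ k, u (k + 1) = u k + (x (k + 1) - v (k + 1))) :
    (∀ k, 1 ≤ k →
      ‖x (k + 1) - v (k + 1)‖ / Real.sqrt n
        ≤ Real.sqrt (lam * C / ρ k) + Real.sqrt (lam * C / ρ (k - 1))) ∧
    Tendsto (fun k => ‖x k - v k‖) atTop (𝓝 0) := by
  have hsn : (0:ℝ) < Real.sqrt n := Real.sqrt_pos.mpr (by exact_mod_cast Nat.lt_of_lt_of_le Nat.zero_lt_one hn)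
  -- bound on ‖u (k+1)‖
  have key : ∀ k, ‖u (k + 1)‖ ≤ Real.sqrt n * Real.sqrt (lam * C / ρ k) := by
    intro k
    have hdiv : (0:ℝ) < lam / ρ k := div_pos hlam (hρ k)
    have hσ : (0:ℝ) < Real.sqrt (lam / ρ k) := Real.sqrt_pos.mpr hdiv
    have hb := hD _ hσ (x (k + 1) + u k)
    rw [Real.sq_sqrt hdiv.le] at hb
    have heq : D (Real.sqrt (lam / ρ k)) (x (k + 1) + u k) - (x (k + 1) + u k)
        = -(u (k + 1)) := by
      rw [← hv k, hu k]; abel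
    rw [heq, norm_neg] at hb
    have h1 : ‖u (k + 1)‖ ≤ Real.sqrt ((n : ℝ) * (lam / ρ k) * C) := by
      have := Real.sqrt_le_sqrt hb
      rwa [Real.sqrt_sq (norm_nonneg _)] at this
    calc ‖u (k + 1)‖ ≤ Real.sqrt ((n : ℝ) * (lam / ρ k) * C) := h1
      _ = Real.sqrt ((n : ℝ) * (lam * C / ρ k)) := by ring_nf
      _ = Real.sqrt n * Real.sqrt (lam * C / ρ k) := Real.sqrt_mul (Nat.cast_nonneg n) _
  -- main inequality
  have main : ∀ k, 1 ≤ k →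
      ‖x (k + 1) - v (k + 1)‖ / Real.sqrt n
        ≤ Real.sqrt (lam * C / ρ k) + Real.sqrt (lam * C / ρ (k - 1)) := by
    intro k hk
    obtain ⟨m, rfl⟩ := Nat.exists_eq_add_of_le hk
    simp only [Nat.add_sub_cancel_left] -- maybe wrong; fix below
    have hxv : x (1 + m + 1) - v (1 + m + 1) = u (1 + m + 1) - u (1 + m) := by
      rw [hu (1 + m)]; abel
    have hnorm : ‖x (1 + m + 1) - v (1 + m + 1)‖ ≤ ‖u (1 + m + 1)‖ + ‖u (1 + m)‖ := by
      rw [hxv]; exact norm_sub_le _ _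
    have h2 : ‖x (1 + m + 1) - v (1 + m + 1)‖
        ≤ Real.sqrt n * (Real.sqrt (lam * C / ρ (1 + m)) + Real.sqrt (lam * C / ρ m)) := by
      have := key (1 + m)
      have h3 := key m
      have hm : (1 + m : ℕ) = m + 1 := by omega
      calc ‖x (1 + m + 1) - v (1 + m + 1)‖ ≤ ‖u (1 + m + 1)‖ + ‖u (1 + m)‖ := hnorm
        _ ≤ Real.sqrt n * Real.sqrt (lam * C / ρ (1 + m))
            + Real.sqrt n * Real.sqrt (lam * C / ρ m) := by
            refine add_le_add this ?_
            rw [hm]; exact h3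
        _ = _ := by ring
    rw [div_le_iff₀ hsn]
    linarith [h2]
  refine ⟨main, ?_⟩
  -- ρ k = ρ 0 * γ ^ k
  have hρk : ∀ k, ρ k = ρ 0 * γ ^ k := by
    intro k
    induction k with
    | zero => simp
    | succ m ih => rw [hupdate m, ih, pow_succ]; ring
  have hγ0 : (0:ℝ) < γ := lt_trans one_pos hγ
  have hlim : Tendsto (fun k => Real.sqrt (lam * C / ρ k)) atTop (𝓝 0) := by
    have h1 : Tendsto (fun k : ℕ => (lam * C / ρ 0) * (1 / γ) ^ k) atTop (𝓝 0) := by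
      have : Tendsto (fun k : ℕ => (1 / γ) ^ k) atTop (𝓝 0) := by
        apply tendsto_pow_atTop_nhds_zero_of_lt_one
        · positivity
        · rw [div_lt_one hγ0]; exact hγ
      simpa using this.const_mul (lam * C / ρ 0)
    have heq : (fun k => Real.sqrt (lam * C / ρ k))
        = fun k => Real.sqrt ((lam * C / ρ 0) * (1 / γ) ^ k) := by
      funext k
      rw [hρk k]
      congr 1
      field_simp
      rw [one_div_pow, mul_assoc, mul_one_div_cancel (pow_ne_zero k hγ0.ne'), mul_one]
    rw [heq]
    have := h1.sqrt
    simpa using this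
  have hbound : Tendsto (fun k : ℕ => Real.sqrt n *
      (Real.sqrt (lam * C / ρ (k + 1)) + Real.sqrt (lam * C / ρ k))) atTop (𝓝 0) := by
    have h1 : Tendsto (fun k : ℕ => Real.sqrt (lam * C / ρ (k + 1))) atTop (𝓝 0) :=
      hlim.comp (tendsto_add_atTop_nat 1)
    have := (h1.add hlim).const_mul (Real.sqrt n)
    simpa using this
  have h2 : Tendsto (fun k => ‖x (k + 2) - v (k + 2)‖) atTop (𝓝 0) := by
    apply squeeze_zero (fun k => norm_nonneg _) _ hbound
    intro k
    have := main (k + 1) (by omega)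
    rw [div_le_iff₀ hsn] at this
    have hsub : (k + 1) - 1 = k := by omega
    rw [hsub] at this
    calc ‖x (k + 2) - v (k + 2)‖ = ‖x (k + 1 + 1) - v (k + 1 + 1)‖ := by norm_num
      _ ≤ (Real.sqrt (lam * C / ρ (k + 1)) + Real.sqrt (lam * C / ρ k)) * Real.sqrt n := this
      _ = _ := by ring
  exact (tendsto_add_atTop_iff_nat 2).mp h2
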